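/- Let β ∈ ℝ_+^n satisfy 0 ≤ β_1 < β_2 < … < β_n (distinct weights, Assumption A1), set β_0 := 0, let f ∈ ℤ_+ with f ≥ 1, and define ψ_f(x) = max{ β^T y : y ∈ {0,1}^n, y ≤ 1 − x, Σ_{i=1}^n y_i ≤ f } for x ∈ {0,1}^n. For x ∈ {0,1}^n and i with x_i = 0, let j(x,f) denote the f-th largest index in { t : x_t = 0 } (equal to 0 if fewer than f such indices exist). Then ψ_f(x + e_i) − ψ_f(x) = β_{j(x,f+1)} − β_i if i ≥ j(x,f), and ψ_f(x + e_i) − ψ_f(x) = 0 otherwise. -/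
import Mathlib


/-- The follower's optimal value under a single capacity constraint `f`. -/
noncomputable def psiSingle (n f : ℕ) (β : ℕ → ℝ) (x : ℕ → ℝ) : ℝ :=
  sSup {v : ℝ | ∃ y : ℕ → ℝ,
    (∀ i, y i = 0 ∨ y i = 1) ∧
    (∀ i, y i ≤ 1 - x i) ∧
    (∑ i ∈ Finset.Icc 1 n, y i ≤ (f : ℝ)) ∧
    v = ∑ i ∈ Finset.Icc 1 n, β i * y i}

/-- The set `S(x)` of non-interdicted elements of `{1,…,n}`. -/
noncomputable def freeSet (n : ℕ) (x : ℕ → ℝ) : Finset ℕ :=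
  (Finset.Icc 1 n).filter (fun t => x t = 0)

lemma psi_eq (n f : ℕ) (β : ℕ → ℝ)
    (hβnn : ∀ t ∈ Finset.Icc 1 n, 0 ≤ β t)
    (hβmono : ∀ s t : ℕ, s ∈ Finset.Icc 1 n → t ∈ Finset.Icc 1 n → s ≤ t → β s ≤ β t)
    (x : ℕ → ℝ) (hx : ∀ i, x i = 0 ∨ x i = 1)
    (T : Finset ℕ) (hTS : T ⊆ freeSet n x) (hTcard : T.card ≤ f)
    (hfull : T ≠ freeSet n x → T.card = f)
    (htop : ∀ s ∈ freeSet n x, s ∉ T → ∀ t ∈ T, s < t) :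
    psiSingle n f β x = ∑ t ∈ T, β t := by
  have hSIcc : freeSet n x ⊆ Finset.Icc 1 n := Finset.filter_subset _ _
  have hTIcc : T ⊆ Finset.Icc 1 n := hTS.trans hSIcc
  apply IsGreatest.csSup_eq
  constructor
  · -- membership: take y = indicator of T
    refine ⟨fun t => if t ∈ T then 1 else 0, ?_, ?_, ?_, ?_⟩
    · intro t; by_cases h : t ∈ T <;> simp [h]
    · intro t
      by_cases h : t ∈ T
      · have : x t = 0 := (Finset.mem_filter.mp (hTS h)).2
        simp [h, this]
      · rcases hx t with h0 | h1
        · simp [h, h0]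
        · simp [h, h1]
    · have : (∑ t ∈ Finset.Icc 1 n, if t ∈ T then (1:ℝ) else 0)
          = ∑ t ∈ (Finset.Icc 1 n).filter (· ∈ T), (1:ℝ) := by
        rw [Finset.sum_filter]
      rw [this]
      have hfe : (Finset.Icc 1 n).filter (· ∈ T) = T := by
        rw [Finset.filter_mem_eq_inter, Finset.inter_eq_right.mpr hTIcc]
      rw [hfe, Finset.sum_const, nsmul_eq_mul, mul_one]
      exact_mod_cast hTcard
    · have : (∑ t ∈ Finset.Icc 1 n, β t * if t ∈ T then (1:ℝ) else 0)
          = ∑ t ∈ (Finset.Icc 1 n).filter (· ∈ T), β t := by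
        rw [Finset.sum_filter]
        congr 1; ext t; by_cases h : t ∈ T <;> simp [h]
      rw [this]
      congr 1
      rw [Finset.filter_mem_eq_inter, Finset.inter_eq_right.mpr hTIcc]
  · -- upper bound
    rintro v ⟨y, hy01, hyx, hysum, rfl⟩
    set A : Finset ℕ := (Finset.Icc 1 n).filter (fun t => y t = 1) with hA
    have hAS : A ⊆ freeSet n x := by
      intro t ht
      rw [hA, Finset.mem_filter] at ht
      rw [freeSet, Finset.mem_filter]
      refine ⟨ht.1, ?_⟩
      have := hyx t
      rw [ht.2] at this
      rcases hx t with h0 | h1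
      · exact h0
      · rw [h1] at this; linarith
    have hsum_eq : ∑ t ∈ Finset.Icc 1 n, y t = (A.card : ℝ) := by
      have : ∑ t ∈ Finset.Icc 1 n, y t
          = ∑ t ∈ Finset.Icc 1 n, if y t = 1 then (1:ℝ) else 0 := by
        apply Finset.sum_congr rfl
        intro t _
        rcases hy01 t with h0 | h1
        · simp [h0]
        · simp [h1]
      rw [this, ← Finset.sum_filter, ← hA, Finset.sum_const, nsmul_eq_mul, mul_one]
    have hAcard : A.card ≤ f := by
      rw [hsum_eq] at hysum; exact_mod_cast hysum
    have hval : ∑ t ∈ Finset.Icc 1 n, β t * y t = ∑ t ∈ A, β t := by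
      have : ∑ t ∈ Finset.Icc 1 n, β t * y t
          = ∑ t ∈ Finset.Icc 1 n, if y t = 1 then β t else 0 := by
        apply Finset.sum_congr rfl
        intro t _
        rcases hy01 t with h0 | h1
        · simp [h0]
        · simp [h1]
      rw [this, ← Finset.sum_filter, ← hA]
    rw [hval]
    -- now show ∑_A β ≤ ∑_T β
    by_cases hsub : A ⊆ T
    · exact Finset.sum_le_sum_of_subset_of_nonneg hsub
        (fun t ht _ => hβnn t (hTIcc ht))
    · -- A \ T nonempty hence T ≠ freeSet and card T = f
      obtain ⟨a, haA, haT⟩ := Finset.not_subset.mp hsub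
      have hTne : T ≠ freeSet n x := by
        intro h; rw [h] at haT; exact haT (hAS haA)
      have hTf : T.card = f := hfull hTne
      have hcard1 : (A \ T).card + (A ∩ T).card = A.card :=
        Finset.card_sdiff_add_card_inter A T
      have hcard2 : (T \ A).card + (T ∩ A).card = T.card :=
        Finset.card_sdiff_add_card_inter T A
      have hinter : (A ∩ T).card = (T ∩ A).card := by rw [Finset.inter_comm]
      have hle : (A \ T).card ≤ (T \ A).card := by omega
      have hATsum : ∑ t ∈ A, β t = ∑ t ∈ A ∩ T, β t + ∑ t ∈ A \ T, β t :=
        (Finset.sum_inter_add_sum_sdiff A T β).symm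
      have hTAsum : ∑ t ∈ T, β t = ∑ t ∈ A ∩ T, β t + ∑ t ∈ T \ A, β t := by
        rw [Finset.inter_comm]
        exact (Finset.sum_inter_add_sum_sdiff T A β).symm
      rw [hATsum, hTAsum]
      have hTAne : (T \ A).Nonempty := by
        rw [← Finset.card_pos]
        have : 0 < (A \ T).card := Finset.card_pos.mpr ⟨a, Finset.mem_sdiff.mpr ⟨haA, haT⟩⟩
        omega
      set m := (T \ A).min' hTAne with hm
      have hmTA : m ∈ T \ A := Finset.min'_mem _ _
      have hmT : m ∈ T := (Finset.mem_sdiff.mp hmTA).1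
      have hmn : 0 ≤ β m := hβnn m (hTIcc hmT)
      have h1 : ∑ t ∈ A \ T, β t ≤ (A \ T).card • β m := by
        apply Finset.sum_le_card_nsmul
        intro t ht
        rw [Finset.mem_sdiff] at ht
        have hlt : t < m := htop t (hAS ht.1) ht.2 m hmT
        exact hβmono t m (hSIcc (hAS ht.1)) (hTIcc hmT) hlt.le
      have h2 : (T \ A).card • β m ≤ ∑ t ∈ T \ A, β t := by
        apply Finset.card_nsmul_le_sum
        intro t ht
        exact hβmono m t (hTIcc hmT) (hTIcc (Finset.mem_sdiff.mp ht).1)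
          (Finset.min'_le _ _ ht)
      have h3 : (A \ T).card • β m ≤ (T \ A).card • β m := by
        simp only [nsmul_eq_mul]
        apply mul_le_mul_of_nonneg_right _ hmn
        exact_mod_cast hle
      linarith

lemma freeSet_add (n : ℕ) (x : ℕ → ℝ) (hx : ∀ i, x i = 0 ∨ x i = 1)
    (i : ℕ) :
    freeSet n (fun t => x t + (if t = i then 1 else 0)) = (freeSet n x).erase i := by
  apply Finset.ext; intro t
  simp only [freeSet, Finset.mem_filter, Finset.mem_erase]
  by_cases h : t = i
  · subst h
    simp only [if_pos rfl]
    constructor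
    · rintro ⟨_, heq⟩
      rcases hx t with h0 | h1
      · rw [h0] at heq; norm_num at heq
      · rw [h1] at heq; norm_num at heq
    · rintro ⟨hne, _⟩; exact absurd rfl hne
  · simp only [if_neg h, add_zero]
    tauto

/-- marginal change of the follower's optimal value when the leader
additionally blocks an unblocked element `i`. Here `j₁ = j(x,f)` and
`j₂ = j(x,f+1)` are the `f`-th and `(f+1)`-st largest indices of
`S(x) = {t : x_t = 0}` (with value `0` when too few such indices exist), the
weights satisfy Assumption A1 (`0 ≤ β_1 < β_2 < ⋯ < β_n`, `β_0 = 0`), and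
`ψ_f(x + e_i) - ψ_f(x) = β_{j(x,f+1)} - β_i` if `i ≥ j(x,f)`, and `= 0` otherwise. -/
theorem greedy_marginal_value (n : ℕ) (β : ℕ → ℝ)
    (hβ0 : β 0 = 0) (hβ1 : 0 ≤ β 1)
    (hβstrict : ∀ i j : ℕ, 1 ≤ i → i < j → j ≤ n → β i < β j)
    (f : ℕ) (hf : 1 ≤ f)
    (x : ℕ → ℝ) (hx : ∀ i, x i = 0 ∨ x i = 1)
    (i : ℕ) (hi : i ∈ Finset.Icc 1 n) (hxi : x i = 0)
    (j₁ : ℕ)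
    (hj₁ : f ≤ (freeSet n x).card →
      j₁ ∈ freeSet n x ∧ ((freeSet n x).filter (fun t => j₁ ≤ t)).card = f)
    (hj₁0 : (freeSet n x).card < f → j₁ = 0)
    (j₂ : ℕ)
    (hj₂ : f + 1 ≤ (freeSet n x).card →
      j₂ ∈ freeSet n x ∧ ((freeSet n x).filter (fun t => j₂ ≤ t)).card = f + 1)
    (hj₂0 : (freeSet n x).card < f + 1 → j₂ = 0) :
    psiSingle n f β (fun t => x t + (if t = i then 1 else 0)) - psiSingle n f β x
      = if j₁ ≤ i then β j₂ - β i else 0 := by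
  have hβnn : ∀ t ∈ Finset.Icc 1 n, 0 ≤ β t := by
    intro t ht
    obtain ⟨h1, h2⟩ := Finset.mem_Icc.mp ht
    rcases eq_or_lt_of_le h1 with h | h
    · rw [← h]; exact hβ1
    · exact le_trans hβ1 (hβstrict 1 t le_rfl h h2).le
  have hβmono : ∀ s t : ℕ, s ∈ Finset.Icc 1 n → t ∈ Finset.Icc 1 n → s ≤ t → β s ≤ β t := by
    intro s t hs ht hst
    rcases eq_or_lt_of_le hst with h | h
    · rw [h]
    · exact (hβstrict s t (Finset.mem_Icc.mp hs).1 h (Finset.mem_Icc.mp ht).2).le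
  set x' : ℕ → ℝ := fun t => x t + (if t = i then 1 else 0) with hx'def
  have hx' : ∀ t, x' t = 0 ∨ x' t = 1 := by
    intro t
    by_cases h : t = i
    · subst h; right; simp [hx'def, hxi]
    · simp only [hx'def, if_neg h, add_zero]; exact hx t
  set S := freeSet n x with hSdef
  have hiS : i ∈ S := Finset.mem_filter.mpr ⟨hi, hxi⟩
  have hS' : freeSet n x' = S.erase i := freeSet_add n x hx i
  have hSIcc : S ⊆ Finset.Icc 1 n := Finset.filter_subset _ _
  by_cases hc : f + 1 ≤ S.card
  · -- large free set
    obtain ⟨hj2S, hj2c⟩ := hj₂ hc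
    obtain ⟨hj1S, hj1c⟩ := hj₁ (by omega)
    set T₁ := S.filter (fun t => j₁ ≤ t) with hT1def
    set T₂ := S.filter (fun t => j₂ ≤ t) with hT2def
    have hj2lt : j₂ < j₁ := by
      by_contra h
      push_neg at h
      have hsub : T₂ ⊆ T₁ := by
        intro t ht
        rw [hT2def, Finset.mem_filter] at ht
        exact Finset.mem_filter.mpr ⟨ht.1, le_trans h ht.2⟩
      have := Finset.card_le_card hsub
      omega
    have hT1sub2 : T₁ ⊆ T₂ := by
      intro t ht
      rw [hT1def, Finset.mem_filter] at ht
      exact Finset.mem_filter.mpr ⟨ht.1, le_trans hj2lt.le ht.2⟩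
    have hj2notT1 : j₂ ∉ T₁ := by
      intro h
      have := (Finset.mem_filter.mp h).2
      omega
    have hj2T2 : j₂ ∈ T₂ := Finset.mem_filter.mpr ⟨hj2S, le_rfl⟩
    have hins : insert j₂ T₁ = T₂ :=
      Finset.eq_of_subset_of_card_le (Finset.insert_subset hj2T2 hT1sub2)
        (by rw [Finset.card_insert_of_notMem hj2notT1, hj1c, hj2c])
    have h1 : psiSingle n f β x = ∑ t ∈ T₁, β t := by
      apply psi_eq n f β hβnn hβmono x hx T₁ (Finset.filter_subset _ _) hj1c.le
        (fun _ => hj1c)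
      intro s hs hsT t ht
      have h1' : ¬ j₁ ≤ s := fun h => hsT (Finset.mem_filter.mpr ⟨hs, h⟩)
      have h2' := (Finset.mem_filter.mp ht).2
      omega
    by_cases hcase : j₁ ≤ i
    · have hiT2 : i ∈ T₂ := Finset.mem_filter.mpr ⟨hiS, by omega⟩
      have h2 : psiSingle n f β x' = ∑ t ∈ T₂.erase i, β t := by
        apply psi_eq n f β hβnn hβmono x' hx'
        · rw [hS']; exact Finset.erase_subset_erase i (Finset.filter_subset _ _)
        · rw [Finset.card_erase_of_mem hiT2, hj2c]; omega
        · intro _; rw [Finset.card_erase_of_mem hiT2, hj2c]; omega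
        · intro s hs hsT t ht
          rw [hS', Finset.mem_erase] at hs
          have hsT2 : s ∉ T₂ := fun h => hsT (Finset.mem_erase.mpr ⟨hs.1, h⟩)
          have h1' : ¬ j₂ ≤ s := fun h => hsT2 (Finset.mem_filter.mpr ⟨hs.2, h⟩)
          have h2' := (Finset.mem_filter.mp (Finset.mem_of_mem_erase ht)).2
          omega
      rw [h1, h2, if_pos hcase, Finset.sum_erase_eq_sub hiT2, ← hins,
        Finset.sum_insert hj2notT1]
      ring
    · have h2 : psiSingle n f β x' = ∑ t ∈ T₁, β t := by
        apply psi_eq n f β hβnn hβmono x' hx' T₁ _ hj1c.le (fun _ => hj1c)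
        · intro s hs hsT t ht
          rw [hS', Finset.mem_erase] at hs
          have h1' : ¬ j₁ ≤ s := fun h => hsT (Finset.mem_filter.mpr ⟨hs.2, h⟩)
          have h2' := (Finset.mem_filter.mp ht).2
          omega
        · rw [hS']
          intro t ht
          have := (Finset.mem_filter.mp ht).2
          exact Finset.mem_erase.mpr ⟨by omega, (Finset.mem_filter.mp ht).1⟩
      rw [h1, h2, if_neg hcase]
      ring
  · -- small free set: everything free is taken
    push_neg at hc
    have hj2z : j₂ = 0 := hj₂0 hc
    have h1 : psiSingle n f β x = ∑ t ∈ S, β t := by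
      apply psi_eq n f β hβnn hβmono x hx S le_rfl (by omega)
        (fun h => absurd rfl h)
      intro s hs hsT
      exact absurd hs hsT
    have h2 : psiSingle n f β x' = ∑ t ∈ S.erase i, β t := by
      apply psi_eq n f β hβnn hβmono x' hx' (S.erase i)
      · rw [hS']
      · have := Finset.card_erase_le (a := i) (s := S); omega
      · intro h; rw [hS'] at h; exact absurd rfl h
      · intro s hs hsT
        rw [hS'] at hs
        exact absurd hs hsT
    have hj1i : j₁ ≤ i := by
      rcases lt_or_ge S.card f with h | h
      · rw [hj₁0 h]; omega
      · have hcard : S.card = f := by omega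
        obtain ⟨hj1S, hj1c⟩ := hj₁ h
        have hfeq : S.filter (fun t => j₁ ≤ t) = S :=
          Finset.eq_of_subset_of_card_le (Finset.filter_subset _ _) (by omega)
        have : i ∈ S.filter (fun t => j₁ ≤ t) := by rw [hfeq]; exact hiS
        exact (Finset.mem_filter.mp this).2
    rw [h1, h2, if_pos hj1i, hj2z, hβ0, Finset.sum_erase_eq_sub hiS]
    ring
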